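/- Distribution-dependent Ψ-bound: Let ℓ₁ and ℓ₂ be two loss functions and H a hypothesis set. Assume there exist a convex function Ψ:[0,∞)→ℝ with Ψ(0)≥0 and a constant ε≥0 such that for all h∈H and all x∈X, Ψ(⟨ΔC_{ℓ₂,H}(h,x)⟩_ε) ≤ ΔC_{ℓ₁,H}(h,x). Then for every hypothesis h∈H, Ψ(R_{ℓ₂}(h) − R*_{ℓ₂,H} + M_{ℓ₂,H}) ≤ R_{ℓ₁}(h) − R*_{ℓ₁,H} + M_{ℓ₁,H} + max{Ψ(0), Ψ(ε)}. -/
import Mathlib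


open MeasureTheory Set

noncomputable section

/-- Conditional `ℓ`-risk of `h` at `x` with conditional probability level `t`. -/
def condRiskT {X : Type*} (ℓ : (X → ℝ) → X → ℝ → ℝ) (h : X → ℝ) (x : X) (t : ℝ) : ℝ :=
  t * ℓ h x 1 + (1 - t) * ℓ h x (-1)

/-- Conditional `ℓ`-risk of `h` at `x`. -/
def condRisk {X : Type*} (ℓ : (X → ℝ) → X → ℝ → ℝ) (η : X → ℝ) (h : X → ℝ) (x : X) : ℝ :=
  condRiskT ℓ h x (η x)

/-- Minimal conditional `ℓ`-risk over the hypothesis set `H` at `x`. -/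
def condRiskStar {X : Type*} (ℓ : (X → ℝ) → X → ℝ → ℝ) (η : X → ℝ) (H : Set (X → ℝ))
    (x : X) : ℝ :=
  sInf ((fun h => condRisk ℓ η h x) '' H)

/-- `ΔC_{ℓ,H}(h,x)`. -/
def deltaC {X : Type*} (ℓ : (X → ℝ) → X → ℝ → ℝ) (η : X → ℝ) (H : Set (X → ℝ))
    (h : X → ℝ) (x : X) : ℝ :=
  condRisk ℓ η h x - condRiskStar ℓ η H x

/-- `ΔC_{ℓ,H}(h,x,t)`. -/
def deltaCT {X : Type*} (ℓ : (X → ℝ) → X → ℝ → ℝ) (H : Set (X → ℝ))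
    (h : X → ℝ) (x : X) (t : ℝ) : ℝ :=
  condRiskT ℓ h x t - sInf ((fun h' => condRiskT ℓ h' x t) '' H)

/-- Generalization error `R_ℓ(h)`. -/
def genErr {X : Type*} [MeasurableSpace X] (μ : Measure X)
    (ℓ : (X → ℝ) → X → ℝ → ℝ) (η : X → ℝ) (h : X → ℝ) : ℝ :=
  ∫ x, condRisk ℓ η h x ∂μ

/-- Best-in-class error `R*_{ℓ,H}`. -/
def bestErr {X : Type*} [MeasurableSpace X] (μ : Measure X)
    (ℓ : (X → ℝ) → X → ℝ → ℝ) (η : X → ℝ) (H : Set (X → ℝ)) : ℝ :=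
  sInf ((fun h => genErr μ ℓ η h) '' H)

/-- Minimizability gap `M_{ℓ,H}`. -/
def minGap {X : Type*} [MeasurableSpace X] (μ : Measure X)
    (ℓ : (X → ℝ) → X → ℝ → ℝ) (η : X → ℝ) (H : Set (X → ℝ)) : ℝ :=
  bestErr μ ℓ η H - ∫ x, condRiskStar ℓ η H x ∂μ

/-- `ε`-truncation `⟨t⟩_ε = t · 1_{t > ε}`. -/
def trunc (ε t : ℝ) : ℝ := if ε < t then t else 0

/-- sign function: `+1` if `α ≥ 0`, `−1` otherwise. -/
def sgn (a : ℝ) : ℝ := if 0 ≤ a then 1 else -1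

/-- The zero-one loss `ℓ_{0-1}(h,x,y) = 1_{sign(h(x)) ≠ y}`. -/
def loss01 {X : Type*} (h : X → ℝ) (x : X) (y : ℝ) : ℝ :=
  if sgn (h x) ≠ y then 1 else 0

/-- Margin-based loss `ℓ_Φ(h,x,y) = Φ(y h(x))`. -/
def marginLoss {X : Type*} (Φ : ℝ → ℝ) (h : X → ℝ) (x : X) (y : ℝ) : ℝ :=
  Φ (y * h x)

end


open MeasureTheory Set in
lemma psi_support_line (Ψ : ℝ → ℝ) (hΨ : ConvexOn ℝ (Ici (0:ℝ)) Ψ) {a : ℝ} (ha : 0 < a) :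
    ∃ c : ℝ, ∀ t ∈ Ici (0:ℝ), Ψ a + c * (t - a) ≤ Ψ t := by
  set S : Set ℝ := (fun x => (Ψ a - Ψ x) / (a - x)) '' Ico 0 a with hSdef
  have h0a : (0:ℝ) ∈ Ico (0:ℝ) a := ⟨le_refl 0, ha⟩
  have hne : S.Nonempty := ⟨_, ⟨0, h0a, rfl⟩⟩
  have hslope : ∀ x ∈ Ico (0:ℝ) a, ∀ t, a < t →
      (Ψ a - Ψ x) / (a - x) ≤ (Ψ t - Ψ a) / (t - a) :=
    fun x hx t ht => hΨ.slope_mono_adjacent hx.1 (le_of_lt (lt_trans ha ht)) hx.2 ht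
  have hbdd : BddAbove S := by
    refine ⟨(Ψ (a+1) - Ψ a) / (a + 1 - a), ?_⟩
    rintro _ ⟨x, hx, rfl⟩
    exact hslope x hx (a+1) (by linarith)
  refine ⟨sSup S, fun t ht => ?_⟩
  rcases lt_trichotomy t a with h1 | h1 | h1
  · have hmem : (Ψ a - Ψ t) / (a - t) ∈ S := ⟨t, ⟨ht, h1⟩, rfl⟩
    have := le_csSup hbdd hmem
    have hat : (0:ℝ) < a - t := by linarith
    rw [div_le_iff₀ hat] at this
    nlinarith
  · simp [h1]
  · have hle : sSup S ≤ (Ψ t - Ψ a) / (t - a) := by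
      refine csSup_le hne ?_
      rintro _ ⟨x, hx, rfl⟩
      exact hslope x hx t h1
    have hta : (0:ℝ) < t - a := by linarith
    have := (mul_le_mul_of_nonneg_right hle (le_of_lt hta))
    rw [div_mul_cancel₀] at this
    · linarith
    · exact ne_of_gt hta

open MeasureTheory Set in
/-- **Distribution-dependent Ψ-bound** (Theorem 1). -/
theorem distribution_dependent_Psi_bound
    {X : Type*} [MeasurableSpace X] [Nonempty X]
    (μ : Measure X) [IsProbabilityMeasure μ]
    (η : X → ℝ) (hηmeas : Measurable η) (hη01 : ∀ x, η x ∈ Icc (0:ℝ) 1)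
    (H : Set (X → ℝ)) (hHne : H.Nonempty) (hHmeas : ∀ h ∈ H, Measurable h)
    (ℓ₁ ℓ₂ : (X → ℝ) → X → ℝ → ℝ)
    (hℓ₁pos : ∀ h x y, 0 ≤ ℓ₁ h x y) (hℓ₂pos : ∀ h x y, 0 ≤ ℓ₂ h x y)
    (hInt₁ : ∀ g ∈ H, Integrable (condRisk ℓ₁ η g) μ)
    (hInt₂ : ∀ g ∈ H, Integrable (condRisk ℓ₂ η g) μ)
    (hIntS₁ : Integrable (condRiskStar ℓ₁ η H) μ)
    (hIntS₂ : Integrable (condRiskStar ℓ₂ η H) μ)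
    (Ψ : ℝ → ℝ) (hΨconv : ConvexOn ℝ (Ici (0:ℝ)) Ψ) (hΨ0 : 0 ≤ Ψ 0)
    (ε : ℝ) (hε : 0 ≤ ε)
    (hcond : ∀ h ∈ H, ∀ x : X, Ψ (trunc ε (deltaC ℓ₂ η H h x)) ≤ deltaC ℓ₁ η H h x)
    (h : X → ℝ) (hh : h ∈ H) :
    Ψ (genErr μ ℓ₂ η h - bestErr μ ℓ₂ η H + minGap μ ℓ₂ η H)
      ≤ genErr μ ℓ₁ η h - bestErr μ ℓ₁ η H + minGap μ ℓ₁ η H + max (Ψ 0) (Ψ ε) := by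
  -- Nonnegativity of conditional risks
  have hcr_nonneg : ∀ (ℓ : (X → ℝ) → X → ℝ → ℝ), (∀ g x y, 0 ≤ ℓ g x y) →
      ∀ g x, 0 ≤ condRisk ℓ η g x := by
    intro ℓ hpos g x
    have h1 := (hη01 x).1
    have h2 := (hη01 x).2
    have := hpos g x 1
    have := hpos g x (-1)
    unfold condRisk condRiskT
    nlinarith
  have hbdd : ∀ (ℓ : (X → ℝ) → X → ℝ → ℝ), (∀ g x y, 0 ≤ ℓ g x y) →
      ∀ x, BddBelow ((fun g => condRisk ℓ η g x) '' H) := by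
    intro ℓ hpos x
    exact ⟨0, by rintro _ ⟨g, hg, rfl⟩; exact hcr_nonneg ℓ hpos g x⟩
  have hΔnn : ∀ (ℓ : (X → ℝ) → X → ℝ → ℝ), (∀ g x y, 0 ≤ ℓ g x y) →
      ∀ g ∈ H, ∀ x, 0 ≤ deltaC ℓ η H g x := by
    intro ℓ hpos g hg x
    have : condRiskStar ℓ η H x ≤ condRisk ℓ η g x :=
      csInf_le (hbdd ℓ hpos x) ⟨g, hg, rfl⟩
    simpa [deltaC, sub_nonneg] using this
  have hΔ₂nn : ∀ x, 0 ≤ deltaC ℓ₂ η H h x := hΔnn ℓ₂ hℓ₂pos h hh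
  have hΔ₁nn : ∀ x, 0 ≤ deltaC ℓ₁ η H h x := hΔnn ℓ₁ hℓ₁pos h hh
  -- pointwise bound : Ψ (Δ₂ x) ≤ Δ₁ x + max (Ψ 0) (Ψ ε)
  have hptwise : ∀ x, Ψ (deltaC ℓ₂ η H h x) ≤ deltaC ℓ₁ η H h x + max (Ψ 0) (Ψ ε) := by
    intro x
    have hc := hcond h hh x
    by_cases ht : ε < deltaC ℓ₂ η H h x
    · rw [trunc, if_pos ht] at hc
      have : (0:ℝ) ≤ max (Ψ 0) (Ψ ε) := le_trans hΨ0 (le_max_left _ _)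
      linarith
    · rw [trunc, if_neg ht] at hc
      push_neg at ht
      have hseg : deltaC ℓ₂ η H h x ∈ segment ℝ (0:ℝ) ε := by
        rw [segment_eq_Icc hε]; exact ⟨hΔ₂nn x, ht⟩
      have := hΨconv.le_on_segment (le_refl (0:ℝ)) hε hseg
      linarith
  -- integrability
  have hIΔ₂ : Integrable (fun x => deltaC ℓ₂ η H h x) μ := (hInt₂ h hh).sub hIntS₂
  have hIΔ₁ : Integrable (fun x => deltaC ℓ₁ η H h x) μ := (hInt₁ h hh).sub hIntS₁
  set a := ∫ x, deltaC ℓ₂ η H h x ∂μ with hadef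
  set b := ∫ x, deltaC ℓ₁ η H h x ∂μ with hbdef
  have ha_nn : 0 ≤ a := integral_nonneg hΔ₂nn
  have hb_nn : 0 ≤ b := integral_nonneg hΔ₁nn
  -- rewrite goal quantities as integrals of deltaC
  have hrw : ∀ (ℓ : (X → ℝ) → X → ℝ → ℝ), Integrable (condRisk ℓ η h) μ →
      Integrable (condRiskStar ℓ η H) μ →
      genErr μ ℓ η h - bestErr μ ℓ η H + minGap μ ℓ η H = ∫ x, deltaC ℓ η H h x ∂μ := by
    intro ℓ hI hIS
    have : ∫ x, deltaC ℓ η H h x ∂μ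
        = (∫ x, condRisk ℓ η h x ∂μ) - ∫ x, condRiskStar ℓ η H x ∂μ := by
      simpa [deltaC] using integral_sub hI hIS
    rw [this]
    unfold minGap genErr
    ring
  rw [hrw ℓ₂ (hInt₂ h hh) hIntS₂, hrw ℓ₁ (hInt₁ h hh) hIntS₁, ← hadef, ← hbdef]
  -- main case analysis
  rcases eq_or_lt_of_le ha_nn with ha0 | hapos
  · rw [← ha0]
    have : Ψ 0 ≤ max (Ψ 0) (Ψ ε) := le_max_left _ _
    linarith
  · obtain ⟨c, hc⟩ := psi_support_line Ψ hΨconv hapos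
    have hmono : ∀ x, Ψ a + c * (deltaC ℓ₂ η H h x - a)
        ≤ deltaC ℓ₁ η H h x + max (Ψ 0) (Ψ ε) := by
      intro x
      exact le_trans (hc _ (hΔ₂nn x)) (hptwise x)
    have hsub : Integrable (fun x => deltaC ℓ₂ η H h x - a) μ := hIΔ₂.sub (integrable_const a)
    have hmul : Integrable (fun x => c * (deltaC ℓ₂ η H h x - a)) μ := hsub.const_mul c
    have hIL : Integrable (fun x => Ψ a + c * (deltaC ℓ₂ η H h x - a)) μ :=
      (integrable_const _).add hmul
    have hIR : Integrable (fun x => deltaC ℓ₁ η H h x + max (Ψ 0) (Ψ ε)) μ :=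
      hIΔ₁.add (integrable_const _)
    have hint := integral_mono hIL hIR hmono
    have hL : ∫ x, (Ψ a + c * (deltaC ℓ₂ η H h x - a)) ∂μ = Ψ a := by
      rw [integral_add (integrable_const _) hmul, integral_const_mul,
        integral_sub hIΔ₂ (integrable_const a), integral_const, integral_const]
      simp [← hadef]
    have hR : ∫ x, (deltaC ℓ₁ η H h x + max (Ψ 0) (Ψ ε)) ∂μ = b + max (Ψ 0) (Ψ ε) := by
      rw [integral_add hIΔ₁ (integrable_const _), integral_const]
      simp [← hbdef]
    rw [hL, hR] at hint
    exact hint
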